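/- Let w be a classical solution of the full damped inextensible cantilever system with p ≡ 0. Then for all t ∈ (0,T): (d/dt)[ ∫₀ᴸ w(x,t) w_t(x,t) dx + (k₂/2)‖w_xx(t)‖² + 2 ∫₀ᴸ u(x,t) u_t(x,t) dx ] = ‖w_t(t)‖² + 2‖u_t(t)‖² − D‖w_xx(t)‖² − 2D‖(w_x w_xx)(t)‖². -/

import Mathlib

open MeasureTheory Set

/-- Spatial partial derivative of a function of `(x, t)`. -/
noncomputable def pdx (f : ℝ → ℝ → ℝ) : ℝ → ℝ → ℝ := fun x t => deriv (fun y => f y t) x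

/-- Temporal partial derivative of a function of `(x, t)`. -/
noncomputable def pdt (f : ℝ → ℝ → ℝ) : ℝ → ℝ → ℝ := fun x t => deriv (fun s => f x s) t

/-- Axial displacement from the effective inextensibility constraint:
`u(x,t) = -(1/2)∫₀ˣ w_x(ξ,t)² dξ`. -/
noncomputable def uF (w : ℝ → ℝ → ℝ) : ℝ → ℝ → ℝ := fun x t =>
  -(1/2) * ∫ ξ in (0:ℝ)..x, (pdx w ξ t) ^ 2

/-- `u_t(x,t) = -∫₀ˣ w_x w_xt dξ`. -/
noncomputable def utF (w : ℝ → ℝ → ℝ) : ℝ → ℝ → ℝ := fun x t =>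
  -∫ ξ in (0:ℝ)..x, pdx w ξ t * pdt (pdx w) ξ t

/-- `u_tt(x,t) = -∫₀ˣ [w_xt² + w_x w_xtt] dξ`. -/
noncomputable def uttF (w : ℝ → ℝ → ℝ) : ℝ → ℝ → ℝ := fun x t =>
  -∫ ξ in (0:ℝ)..x, ((pdt (pdx w) ξ t) ^ 2 + pdx w ξ t * pdt (pdt (pdx w)) ξ t)

/-- A classical solution of the full damped inextensible cantilever system on
`[0,L] × [0,T]` with forcing `p`: smooth on an open neighborhood of `[0,L] × [0,T]`,
satisfying the PDE
`w_tt + D ∂ₓ⁴w + k₂ ∂ₓ⁴w_t − D ∂ₓ(w_xx² w_x) + D ∂ₓ²(w_x² w_xx) + ∂ₓ(w_x ∫ₓᴸ u_tt dξ) = p`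
pointwise and the clamped-free boundary conditions. -/
def IsFullSol (L D k2 T : ℝ) (p w : ℝ → ℝ → ℝ) : Prop :=
  (∃ U : Set (ℝ × ℝ), IsOpen U ∧ Icc (0:ℝ) L ×ˢ Icc (0:ℝ) T ⊆ U ∧
      ContDiffOn ℝ (⊤ : ℕ∞) (fun q : ℝ × ℝ => w q.1 q.2) U) ∧
  (∀ x ∈ Icc (0:ℝ) L, ∀ t ∈ Icc (0:ℝ) T,
      pdt (pdt w) x t + D * pdx (pdx (pdx (pdx w))) x t
        + k2 * pdx (pdx (pdx (pdx (pdt w)))) x t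
        - D * pdx (fun y s => (pdx (pdx w) y s) ^ 2 * pdx w y s) x t
        + D * pdx (pdx (fun y s => (pdx w y s) ^ 2 * pdx (pdx w) y s)) x t
        + pdx (fun y s => pdx w y s * ∫ ξ in y..L, uttF w ξ s) x t
      = p x t) ∧
  (∀ t ∈ Icc (0:ℝ) T,
    w 0 t = 0 ∧ pdx w 0 t = 0 ∧ pdx (pdx w) L t = 0 ∧ pdx (pdx (pdx w)) L t = 0)


/-- Smoothness of the uncurried function on a set. -/
def Smo (U : Set (ℝ × ℝ)) (g : ℝ → ℝ → ℝ) : Prop :=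
  ContDiffOn ℝ (⊤ : ℕ∞) (fun q : ℝ × ℝ => g q.1 q.2) U

namespace Smo

variable {U : Set (ℝ × ℝ)} {g : ℝ → ℝ → ℝ} {x t : ℝ}

lemma diffAt (hU : IsOpen U) (hg : Smo U g) {q : ℝ × ℝ} (hq : q ∈ U) :
    DifferentiableAt ℝ (fun p : ℝ × ℝ => g p.1 p.2) q :=
  (hg.contDiffAt (hU.mem_nhds hq)).differentiableAt (by simp)

lemma hasDerivAt_x (hU : IsOpen U) (hg : Smo U g) (hq : (x, t) ∈ U) :
    HasDerivAt (fun y => g y t) (pdx g x t) x := by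
  have hline : DifferentiableAt ℝ (fun y : ℝ => ((y, t) : ℝ × ℝ)) x :=
    (differentiableAt_id.prodMk (differentiableAt_const t))
  have hd : DifferentiableAt ℝ (fun y => g y t) x :=
    (hg.diffAt hU hq).comp (g := fun p : ℝ × ℝ => g p.1 p.2) x hline
  exact hd.hasDerivAt

lemma hasDerivAt_t (hU : IsOpen U) (hg : Smo U g) (hq : (x, t) ∈ U) :
    HasDerivAt (fun s => g x s) (pdt g x t) t := by
  have hline : DifferentiableAt ℝ (fun s : ℝ => ((x, s) : ℝ × ℝ)) t :=
    ((differentiableAt_const x).prodMk differentiableAt_id)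
  have hd : DifferentiableAt ℝ (fun s => g x s) t :=
    (hg.diffAt hU hq).comp t hline
  exact hd.hasDerivAt

lemma pdx_eq_fderiv (hU : IsOpen U) (hg : Smo U g) (hq : (x, t) ∈ U) :
    pdx g x t = fderiv ℝ (fun q : ℝ × ℝ => g q.1 q.2) (x, t) (1, 0) := by
  have h1 : HasDerivAt (fun y : ℝ => ((y, t) : ℝ × ℝ)) ((1 : ℝ), (0 : ℝ)) x :=
    (hasDerivAt_id x).prodMk (hasDerivAt_const x t)
  have h2 := ((hg.diffAt hU hq).hasFDerivAt).comp_hasDerivAt x h1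
  exact h2.deriv

lemma pdt_eq_fderiv (hU : IsOpen U) (hg : Smo U g) (hq : (x, t) ∈ U) :
    pdt g x t = fderiv ℝ (fun q : ℝ × ℝ => g q.1 q.2) (x, t) (0, 1) := by
  have h1 : HasDerivAt (fun s : ℝ => ((x, s) : ℝ × ℝ)) ((0 : ℝ), (1 : ℝ)) t :=
    (hasDerivAt_const t x).prodMk (hasDerivAt_id t)
  have h2 := ((hg.diffAt hU hq).hasFDerivAt).comp_hasDerivAt t h1
  exact h2.deriv

lemma pdx' (hU : IsOpen U) (hg : Smo U g) : Smo U (pdx g) := by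
  have h1 : ContDiffOn ℝ (⊤ : ℕ∞) (fun q => fderiv ℝ (fun q : ℝ × ℝ => g q.1 q.2) q) U :=
    hg.fderiv_of_isOpen hU (by simp)
  have h2 : ContDiffOn ℝ (⊤ : ℕ∞)
      (fun q => fderiv ℝ (fun q : ℝ × ℝ => g q.1 q.2) q ((1 : ℝ), (0 : ℝ))) U :=
    h1.clm_apply contDiffOn_const
  refine h2.congr fun q hq => ?_
  have := hg.pdx_eq_fderiv hU (x := q.1) (t := q.2) (by simpa using hq)
  simpa using this

lemma pdt' (hU : IsOpen U) (hg : Smo U g) : Smo U (pdt g) := by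
  have h1 : ContDiffOn ℝ (⊤ : ℕ∞) (fun q => fderiv ℝ (fun q : ℝ × ℝ => g q.1 q.2) q) U :=
    hg.fderiv_of_isOpen hU (by simp)
  have h2 : ContDiffOn ℝ (⊤ : ℕ∞)
      (fun q => fderiv ℝ (fun q : ℝ × ℝ => g q.1 q.2) q ((0 : ℝ), (1 : ℝ))) U :=
    h1.clm_apply contDiffOn_const
  refine h2.congr fun q hq => ?_
  have := hg.pdt_eq_fderiv hU (x := q.1) (t := q.2) (by simpa using hq)
  simpa using this

lemma contOn (hg : Smo U g) : ContinuousOn (fun q : ℝ × ℝ => g q.1 q.2) U :=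
  ContDiffOn.continuousOn hg

lemma continuousOn_slice_x (hg : Smo U g) {s : Set ℝ}
    (hs : ∀ y ∈ s, (y, t) ∈ U) : ContinuousOn (fun y => g y t) s := by
  have hc : ContinuousOn (fun y : ℝ => ((y, t) : ℝ × ℝ)) s :=
    (continuous_id.prodMk continuous_const).continuousOn
  exact ContinuousOn.comp (Smo.contOn hg) hc hs

lemma swap (hU : IsOpen U) (hg : Smo U g) (hq : (x, t) ∈ U) :
    pdt (pdx g) x t = pdx (pdt g) x t := by
  set G : ℝ × ℝ → ℝ := fun q => g q.1 q.2 with hG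
  set f' : ℝ × ℝ → (ℝ × ℝ) →L[ℝ] ℝ := fun q => fderiv ℝ G q with hf'
  have hf's : ContDiffOn ℝ (⊤ : ℕ∞) f' U := hg.fderiv_of_isOpen hU (by simp)
  have hf'd : DifferentiableAt ℝ f' (x, t) :=
    ((hf's.contDiffAt (hU.mem_nhds hq)).differentiableAt (by simp))
  set f'' := fderiv ℝ f' (x, t) with hf''
  have hev : ∀ᶠ q in nhds (x, t), HasFDerivAt G (f' q) q := by
    filter_upwards [hU.mem_nhds hq] with q hqU using (hg.diffAt hU hqU).hasFDerivAt
  have hsymm := second_derivative_symmetric_of_eventually hev hf'd.hasFDerivAt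
  -- left side
  have hUx : ∀ᶠ s in nhds t, (x, s) ∈ U := by
    have : Continuous (fun s : ℝ => ((x, s) : ℝ × ℝ)) := by continuity
    exact this.continuousAt.preimage_mem_nhds (hU.mem_nhds hq)
  have hUy : ∀ᶠ y in nhds x, (y, t) ∈ U := by
    have : Continuous (fun y : ℝ => ((y, t) : ℝ × ℝ)) := by continuity
    exact this.continuousAt.preimage_mem_nhds (hU.mem_nhds hq)
  have hL : pdt (pdx g) x t = f'' (0, 1) (1, 0) := by
    have hee : (fun s => pdx g x s) =ᶠ[nhds t] fun s => f' (x, s) (1, 0) := by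
      filter_upwards [hUx] with s hs using hg.pdx_eq_fderiv hU hs
    have hd1 : HasDerivAt (fun s => f' (x, s)) (f'' (0, 1)) t := by
      have h1 : HasDerivAt (fun s : ℝ => ((x, s) : ℝ × ℝ)) ((0 : ℝ), (1 : ℝ)) t :=
        (hasDerivAt_const t x).prodMk (hasDerivAt_id t)
      exact (hf'd.hasFDerivAt).comp_hasDerivAt t h1
    have hd2 : HasDerivAt (fun s => f' (x, s) ((1 : ℝ), (0 : ℝ))) (f'' (0, 1) (1, 0)) t := by
      have := hd1.clm_apply (hasDerivAt_const t ((1 : ℝ), (0 : ℝ)))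
      simpa using this
    calc pdt (pdx g) x t = deriv (fun s => pdx g x s) t := rfl
      _ = deriv (fun s => f' (x, s) ((1 : ℝ), (0 : ℝ))) t := hee.deriv_eq
      _ = f'' (0, 1) (1, 0) := hd2.deriv
  have hR : pdx (pdt g) x t = f'' (1, 0) (0, 1) := by
    have hee : (fun y => pdt g y t) =ᶠ[nhds x] fun y => f' (y, t) (0, 1) := by
      filter_upwards [hUy] with y hy using hg.pdt_eq_fderiv hU hy
    have hd1 : HasDerivAt (fun y => f' (y, t)) (f'' (1, 0)) x := by
      have h1 : HasDerivAt (fun y : ℝ => ((y, t) : ℝ × ℝ)) ((1 : ℝ), (0 : ℝ)) x :=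
        (hasDerivAt_id x).prodMk (hasDerivAt_const x t)
      exact (hf'd.hasFDerivAt).comp_hasDerivAt x h1
    have hd2 : HasDerivAt (fun y => f' (y, t) ((0 : ℝ), (1 : ℝ))) (f'' (1, 0) (0, 1)) x := by
      have := hd1.clm_apply (hasDerivAt_const x ((0 : ℝ), (1 : ℝ)))
      simpa using this
    calc pdx (pdt g) x t = deriv (fun y => pdt g y t) x := rfl
      _ = deriv (fun y => f' (y, t) ((0 : ℝ), (1 : ℝ))) x := hee.deriv_eq
      _ = f'' (1, 0) (0, 1) := hd2.deriv
  rw [hL, hR, hsymm (0, 1) (1, 0)]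

end Smo

lemma pdx_congrOn {U : Set (ℝ × ℝ)} (hU : IsOpen U) {f g : ℝ → ℝ → ℝ}
    (h : ∀ q ∈ U, f q.1 q.2 = g q.1 q.2) {x t : ℝ} (hq : (x, t) ∈ U) :
    pdx f x t = pdx g x t := by
  have hUy : ∀ᶠ y in nhds x, (y, t) ∈ U := by
    have : Continuous (fun y : ℝ => ((y, t) : ℝ × ℝ)) := by continuity
    exact this.continuousAt.preimage_mem_nhds (hU.mem_nhds hq)
  have hee : (fun y => f y t) =ᶠ[nhds x] fun y => g y t := by
    filter_upwards [hUy] with y hy using h (y, t) hy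
  exact hee.deriv_eq

lemma leibniz_ball {a b t δ C : ℝ} (hδ : 0 < δ) {F F' : ℝ → ℝ → ℝ}
    (hFc : ∀ s ∈ Metric.ball t δ, ContinuousOn (fun x => F x s) (Set.uIcc a b))
    (hF'c : ∀ s ∈ Metric.ball t δ, ContinuousOn (fun x => F' x s) (Set.uIcc a b))
    (hderiv : ∀ x ∈ Set.uIcc a b, ∀ s ∈ Metric.ball t δ,
      HasDerivAt (fun s' => F x s') (F' x s) s)
    (hbound : ∀ x ∈ Set.uIcc a b, ∀ s ∈ Metric.ball t δ, |F' x s| ≤ C) :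
    ∀ s₀ ∈ Metric.ball t (δ / 2),
      HasDerivAt (fun s => ∫ x in a..b, F x s) (∫ x in a..b, F' x s₀) s₀ := by
  intro s₀ hs₀
  have hsub : Metric.ball s₀ (δ / 2) ⊆ Metric.ball t δ := by
    intro y hy
    rw [Metric.mem_ball] at *
    calc dist y t ≤ dist y s₀ + dist s₀ t := dist_triangle _ _ _
      _ < δ / 2 + δ / 2 := by linarith
      _ = δ := by ring
  have hs₀' : s₀ ∈ Metric.ball t δ := hsub (Metric.mem_ball_self (by linarith))
  refine (intervalIntegral.hasDerivAt_integral_of_dominated_loc_of_deriv_le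
      (F := fun s x => F x s) (F' := fun s x => F' x s) (bound := fun _ => C)
      (Metric.ball_mem_nhds s₀ (half_pos hδ)) ?_ ?_ ?_ ?_ ?_ ?_).2
  · filter_upwards [Metric.ball_mem_nhds s₀ (half_pos hδ)] with s hs
    exact (ContinuousOn.mono (hFc s (hsub hs)) uIoc_subset_uIcc).aestronglyMeasurable
      measurableSet_uIoc
  · exact (hFc s₀ hs₀').intervalIntegrable
  · exact (ContinuousOn.mono (hF'c s₀ hs₀') uIoc_subset_uIcc).aestronglyMeasurable
      measurableSet_uIoc
  · exact ae_of_all _ fun x hx s hs => by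
      simpa [Real.norm_eq_abs] using hbound x (uIoc_subset_uIcc hx) s (hsub hs)
  · exact intervalIntegrable_const
  · exact ae_of_all _ fun x hx s hs => hderiv x (uIoc_subset_uIcc hx) s (hsub hs)

lemma primitive_hasDerivAt {h : ℝ → ℝ} {x p q : ℝ} (hp : p < 0) (hq : 0 < q)
    (hx : x ∈ Set.Ioo p q) (hh : ∀ y ∈ Set.Ioo p q, ContinuousAt h y) :
    HasDerivAt (fun y => ∫ ξ in (0 : ℝ)..y, h ξ) (h x) x := by
  have h0 : (0 : ℝ) ∈ Set.Ioo p q := ⟨hp, hq⟩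
  have hsub : Set.uIcc (0 : ℝ) x ⊆ Set.Ioo p q :=
    (Set.ordConnected_Ioo).uIcc_subset h0 hx
  refine intervalIntegral.integral_hasDerivAt_right ?_ ?_ (hh x hx)
  · exact ContinuousOn.intervalIntegrable fun y hy => (hh y (hsub hy)).continuousWithinAt
  · exact ⟨Set.Ioo p q, isOpen_Ioo.mem_nhds hx,
      (ContinuousOn.aestronglyMeasurable
        (fun y hy => (hh y hy).continuousWithinAt) measurableSet_Ioo)⟩

lemma primitive_hasDerivAt_right {h : ℝ → ℝ} {x p q b : ℝ} (hp : p < 0) (hq : 0 < q)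
    (hx : x ∈ Set.Ioo p q) (hb : b ∈ Set.Ioo p q)
    (hh : ∀ y ∈ Set.Ioo p q, ContinuousAt h y) :
    HasDerivAt (fun y => ∫ ξ in y..b, h ξ) (-h x) x := by
  have h0 : (0 : ℝ) ∈ Set.Ioo p q := ⟨hp, hq⟩
  have key : ∀ y ∈ Set.Ioo p q,
      (∫ ξ in y..b, h ξ) = (∫ ξ in (0 : ℝ)..b, h ξ) - ∫ ξ in (0 : ℝ)..y, h ξ := by
    intro y hy
    have hint : ∀ u ∈ Set.Ioo p q, ∀ v ∈ Set.Ioo p q, IntervalIntegrable h volume u v := by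
      intro u hu v hv
      exact ContinuousOn.intervalIntegrable fun z hz =>
        (hh z ((Set.ordConnected_Ioo).uIcc_subset hu hv hz)).continuousWithinAt
    have := intervalIntegral.integral_add_adjacent_intervals
      (hint (0:ℝ) h0 y hy) (hint y hy b hb)
    linarith
  have hee : (fun y => ∫ ξ in y..b, h ξ) =ᶠ[nhds x]
      fun y => (∫ ξ in (0 : ℝ)..b, h ξ) - ∫ ξ in (0 : ℝ)..y, h ξ := by
    filter_upwards [isOpen_Ioo.mem_nhds hx] with y hy using key y hy
  have hd : HasDerivAt (fun y => (∫ ξ in (0 : ℝ)..b, h ξ) - ∫ ξ in (0 : ℝ)..y, h ξ) (-h x) x := by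
    simpa using (hasDerivAt_const x (∫ ξ in (0 : ℝ)..b, h ξ)).fun_sub
      (primitive_hasDerivAt hp hq hx hh)
  exact hd.congr_of_eventuallyEq hee
set_option maxHeartbeats 2000000 in
/-- Exact equipartition (stability multiplier) identity, obtained by multiplying the
unforced damped equation by `w`; this underlies estimate (6.7) of the paper. -/
theorem full_equipartition_identity
    (L D k2 T : ℝ) (hL : 0 < L) (hD : 0 < D) (hk2 : 0 < k2) (hT : 0 < T)
    (w : ℝ → ℝ → ℝ) (hw : IsFullSol L D k2 T (fun _ _ => 0) w) :
    ∀ t ∈ Ioo (0:ℝ) T,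
      deriv (fun s =>
          (∫ x in (0:ℝ)..L, w x s * pdt w x s)
            + (k2/2) * (∫ x in (0:ℝ)..L, (pdx (pdx w) x s) ^ 2)
            + 2 * (∫ x in (0:ℝ)..L, uF w x s * utF w x s)) t
        = (∫ x in (0:ℝ)..L, (pdt w x t) ^ 2)
          + 2 * (∫ x in (0:ℝ)..L, (utF w x t) ^ 2)
          - D * (∫ x in (0:ℝ)..L, (pdx (pdx w) x t) ^ 2)
          - 2 * D * (∫ x in (0:ℝ)..L, (pdx w x t * pdx (pdx w) x t) ^ 2) := by
  intro t ht
  obtain ⟨⟨U, hUo, hUsub, hsm⟩, hpde, hbc⟩ := hw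
  -- smoothness bookkeeping
  have S0 : Smo U w := hsm
  have Sx : Smo U (pdx w) := S0.pdx' hUo
  have Sxx : Smo U (pdx (pdx w)) := Sx.pdx' hUo
  have Sxxx : Smo U (pdx (pdx (pdx w))) := Sxx.pdx' hUo
  have Sxxxx : Smo U (pdx (pdx (pdx (pdx w)))) := Sxxx.pdx' hUo
  have St : Smo U (pdt w) := S0.pdt' hUo
  have Stt : Smo U (pdt (pdt w)) := St.pdt' hUo
  have Sxt : Smo U (pdt (pdx w)) := Sx.pdt' hUo
  have Sxtt : Smo U (pdt (pdt (pdx w))) := Sxt.pdt' hUo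
  have Sxxt : Smo U (pdt (pdx (pdx w))) := Sxx.pdt' hUo
  have Stx1 : Smo U (pdx (pdt w)) := St.pdx' hUo
  have Stx2 : Smo U (pdx (pdx (pdt w))) := Stx1.pdx' hUo
  have Stx3 : Smo U (pdx (pdx (pdx (pdt w)))) := Stx2.pdx' hUo
  have Stx4 : Smo U (pdx (pdx (pdx (pdx (pdt w))))) := Stx3.pdx' hUo
  have SΦ : Smo U (fun y s => (pdx (pdx w) y s) ^ 2 * pdx w y s) := (Sxx.pow 2).mul Sx
  have SΦx : Smo U (pdx (fun y s => (pdx (pdx w) y s) ^ 2 * pdx w y s)) := SΦ.pdx' hUo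
  have SΨ : Smo U (fun y s => (pdx w y s) ^ 2 * pdx (pdx w) y s) := (Sx.pow 2).mul Sxx
  have SΨx : Smo U (pdx (fun y s => (pdx w y s) ^ 2 * pdx (pdx w) y s)) := SΨ.pdx' hUo
  have SΨxx : Smo U (pdx (pdx (fun y s => (pdx w y s) ^ 2 * pdx (pdx w) y s))) := SΨx.pdx' hUo
  -- geometric setup
  have hK : IsCompact (Icc (0:ℝ) L ×ˢ Icc (0:ℝ) T) := isCompact_Icc.prod isCompact_Icc
  obtain ⟨ε, hε, hthick⟩ := hK.exists_thickening_subset_open hUo hUsub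
  set δ : ℝ := min (ε/2) (min t (T - t)) with hδdef
  have hδ : 0 < δ := lt_min (half_pos hε) (lt_min ht.1 (by linarith [ht.2]))
  have hδε : δ ≤ ε/2 := min_le_left _ _
  have hδt : δ ≤ t := le_trans (min_le_right _ _) (min_le_left _ _)
  have hδT : δ ≤ T - t := le_trans (min_le_right _ _) (min_le_right _ _)
  have hmem : ∀ x' ∈ Icc (-δ) (L+δ), ∀ s ∈ Icc (t-δ) (t+δ), (x', s) ∈ U := by
    intro x' hx' s hs
    apply hthick
    rw [Metric.mem_thickening_iff]
    have hsT : s ∈ Icc (0:ℝ) T := ⟨by linarith [hs.1], by linarith [hs.2]⟩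
    refine ⟨(max 0 (min x' L), s), ⟨⟨le_max_left _ _, max_le hL.le (min_le_right _ _)⟩, hsT⟩, ?_⟩
    have habs : |x' - max 0 (min x' L)| ≤ δ := by
      rcases le_total x' 0 with h0 | h0
      · rw [min_eq_left (le_trans h0 hL.le), max_eq_left h0]
        rw [abs_le]; constructor <;> [linarith [hx'.1]; linarith]
      · rcases le_total x' L with h1 | h1
        · rw [min_eq_left h1, max_eq_right h0]; simp [hδ.le]
        · rw [min_eq_right h1, max_eq_right hL.le]
          rw [abs_le]; constructor <;> [linarith; linarith [hx'.2]]
    have : dist (x', s) (max 0 (min x' L), s) ≤ δ := by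
      rw [Prod.dist_eq]
      simp only [dist_self]
      refine max_le ?_ hδ.le
      rw [Real.dist_eq]; exact habs
    calc dist (x', s) (max 0 (min x' L), s) ≤ δ := this
      _ < ε := by linarith [hδε, hε]
  have htmem : t ∈ Icc (t-δ) (t+δ) := ⟨by linarith, by linarith⟩
  have hballIcc : Metric.ball t δ ⊆ Icc (t-δ) (t+δ) := by
    intro s hs
    rw [Metric.mem_ball, Real.dist_eq, abs_sub_lt_iff] at hs
    exact ⟨by linarith [hs.2], by linarith [hs.1]⟩
  have hIccδ : Icc (0:ℝ) L ⊆ Icc (-δ) (L+δ) :=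
    Icc_subset_Icc (by linarith) (by linarith)
  have hIccsub : Icc (0:ℝ) L ⊆ Ioo (-δ) (L+δ) := fun y hy => ⟨by linarith [hy.1], by linarith [hy.2]⟩
  have hIooδ : Ioo (-δ) (L+δ) ⊆ Icc (-δ) (L+δ) := Ioo_subset_Icc_self
  have hUy : ∀ y ∈ Icc (0:ℝ) L, (y, t) ∈ U := fun y hy => hmem y (hIccδ hy) t htmem
  have huIL : uIcc (0:ℝ) L = Icc 0 L := uIcc_of_le hL.le
  -- pointwise continuity of slices
  have cA : ∀ g : ℝ → ℝ → ℝ, Smo U g → ∀ s ∈ Icc (t-δ) (t+δ), ∀ y ∈ Icc (-δ) (L+δ),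
      ContinuousAt (fun y' => g y' s) y := by
    intro g hg s hs y hy
    have h1 : ContinuousAt (fun q : ℝ × ℝ => g q.1 q.2) (y, s) :=
      (hg.contOn).continuousAt (hUo.mem_nhds (hmem y hy s hs))
    have h2 : ContinuousAt (fun y' : ℝ => ((y', s) : ℝ × ℝ)) y :=
      (continuous_id.prodMk continuous_const).continuousAt
    have h3 : ContinuousAt ((fun q : ℝ × ℝ => g q.1 q.2) ∘ fun y' : ℝ => (y', s)) y :=
      ContinuousAt.comp (x := y) (f := fun y' : ℝ => ((y', s) : ℝ × ℝ)) h1 h2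
    exact h3
  -- uniform bounds
  have getB : ∀ g : ℝ → ℝ → ℝ, Smo U g → ∃ C : ℝ, 0 ≤ C ∧
      ∀ y ∈ Icc (-δ) (L+δ), ∀ s ∈ Icc (t-δ) (t+δ), |g y s| ≤ C := by
    intro g hg
    have hKc : IsCompact (Icc (-δ) (L+δ) ×ˢ Icc (t-δ) (t+δ)) := isCompact_Icc.prod isCompact_Icc
    have hKcU : Icc (-δ) (L+δ) ×ˢ Icc (t-δ) (t+δ) ⊆ U := fun q hq => by
      have := hmem q.1 hq.1 q.2 hq.2; simpa using this
    obtain ⟨C, hC⟩ := hKc.exists_bound_of_continuousOn (hg.contOn.mono hKcU)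
    have h0m : ((0:ℝ), t) ∈ Icc (-δ) (L+δ) ×ˢ Icc (t-δ) (t+δ) :=
      mk_mem_prod (show (0:ℝ) ∈ Icc (-δ) (L+δ) from ⟨by linarith, by linarith⟩) htmem
    refine ⟨C, le_trans (norm_nonneg _) (hC _ h0m), fun y hy s hs => ?_⟩
    simpa [Real.norm_eq_abs] using hC (y, s) (mk_mem_prod hy hs)
  obtain ⟨C0, hC0n, hC0⟩ := getB w S0
  obtain ⟨C1, hC1n, hC1⟩ := getB (pdx w) Sx
  obtain ⟨C2, hC2n, hC2⟩ := getB (pdt (pdx w)) Sxt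
  obtain ⟨C3, hC3n, hC3⟩ := getB (pdt (pdt (pdx w))) Sxtt
  obtain ⟨C4, hC4n, hC4⟩ := getB (pdt w) St
  obtain ⟨C5, hC5n, hC5⟩ := getB (pdt (pdt w)) Stt
  obtain ⟨C6, hC6n, hC6⟩ := getB (pdx (pdx w)) Sxx
  obtain ⟨C7, hC7n, hC7⟩ := getB (pdt (pdx (pdx w))) Sxxt
  -- bounds on u-quantities
  have hIsub : ∀ x ∈ Icc (0:ℝ) L, uIoc (0:ℝ) x ⊆ Icc (-δ) (L+δ) := by
    intro x hx
    rw [uIoc_of_le hx.1]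
    exact fun ξ hξ => hIccδ ⟨hξ.1.le, le_trans hξ.2 hx.2⟩
  have hbu : ∀ x ∈ Icc (0:ℝ) L, ∀ s ∈ Icc (t-δ) (t+δ), |uF w x s| ≤ (1/2)*(C1*C1*L) := by
    intro x hx s hs
    have hnorm : ‖∫ ξ in (0:ℝ)..x, (pdx w ξ s) ^ 2‖ ≤ C1*C1 * |x - 0| := by
      apply intervalIntegral.norm_integral_le_of_norm_le_const
      intro ξ hξ
      rw [Real.norm_eq_abs, pow_two, abs_mul]
      exact mul_le_mul (hC1 ξ (hIsub x hx hξ) s hs) (hC1 ξ (hIsub x hx hξ) s hs) (abs_nonneg _) hC1n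
    rw [Real.norm_eq_abs] at hnorm
    have hx0 : |x - 0| ≤ L := by rw [abs_le]; constructor <;> [linarith [hx.1]; linarith [hx.2]]
    have : |uF w x s| = (1/2) * |∫ ξ in (0:ℝ)..x, (pdx w ξ s) ^ 2| := by
      rw [uF, abs_mul]; norm_num
    rw [this]
    have : C1 * C1 * |x - 0| ≤ C1*C1*L := by
      apply mul_le_mul_of_nonneg_left hx0 (mul_nonneg hC1n hC1n)
    nlinarith [abs_nonneg (∫ ξ in (0:ℝ)..x, (pdx w ξ s) ^ 2)]
  have hbut : ∀ x ∈ Icc (0:ℝ) L, ∀ s ∈ Icc (t-δ) (t+δ), |utF w x s| ≤ C1*C2*L := by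
    intro x hx s hs
    have hnorm : ‖∫ ξ in (0:ℝ)..x, pdx w ξ s * pdt (pdx w) ξ s‖ ≤ C1*C2 * |x - 0| := by
      apply intervalIntegral.norm_integral_le_of_norm_le_const
      intro ξ hξ
      rw [Real.norm_eq_abs, abs_mul]
      exact mul_le_mul (hC1 ξ (hIsub x hx hξ) s hs) (hC2 ξ (hIsub x hx hξ) s hs) (abs_nonneg _) hC1n
    rw [Real.norm_eq_abs] at hnorm
    have hx0 : |x - 0| ≤ L := by rw [abs_le]; constructor <;> [linarith [hx.1]; linarith [hx.2]]
    have heq : |utF w x s| = |∫ ξ in (0:ℝ)..x, pdx w ξ s * pdt (pdx w) ξ s| := by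
      rw [utF, abs_neg]
    rw [heq]
    nlinarith [mul_nonneg hC1n hC2n]
  have hbutt : ∀ x ∈ Icc (0:ℝ) L, ∀ s ∈ Icc (t-δ) (t+δ),
      |uttF w x s| ≤ (C2*C2 + C1*C3)*L := by
    intro x hx s hs
    have hnorm : ‖∫ ξ in (0:ℝ)..x, ((pdt (pdx w) ξ s) ^ 2 + pdx w ξ s * pdt (pdt (pdx w)) ξ s)‖
        ≤ (C2*C2 + C1*C3) * |x - 0| := by
      apply intervalIntegral.norm_integral_le_of_norm_le_const
      intro ξ hξ
      rw [Real.norm_eq_abs]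
      calc |(pdt (pdx w) ξ s) ^ 2 + pdx w ξ s * pdt (pdt (pdx w)) ξ s|
          ≤ |(pdt (pdx w) ξ s) ^ 2| + |pdx w ξ s * pdt (pdt (pdx w)) ξ s| := abs_add_le _ _
        _ ≤ C2*C2 + C1*C3 := by
            rw [pow_two, abs_mul, abs_mul]
            exact add_le_add
              (mul_le_mul (hC2 ξ (hIsub x hx hξ) s hs) (hC2 ξ (hIsub x hx hξ) s hs) (abs_nonneg _) hC2n)
              (mul_le_mul (hC1 ξ (hIsub x hx hξ) s hs) (hC3 ξ (hIsub x hx hξ) s hs) (abs_nonneg _) hC1n)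
    rw [Real.norm_eq_abs] at hnorm
    have hx0 : |x - 0| ≤ L := by rw [abs_le]; constructor <;> [linarith [hx.1]; linarith [hx.2]]
    have heq : |uttF w x s| = |∫ ξ in (0:ℝ)..x, ((pdt (pdx w) ξ s) ^ 2 + pdx w ξ s * pdt (pdt (pdx w)) ξ s)| := by
      rw [uttF, abs_neg]
    rw [heq]
    nlinarith [add_nonneg (mul_nonneg hC2n hC2n) (mul_nonneg hC1n hC3n)]
  -- primitive derivative facts for uF, utF, uttF in the x-variable
  have hδ0 : -δ < 0 := by linarith
  have hLδ : 0 < L + δ := by linarith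
  have hprimu : ∀ s ∈ Icc (t-δ) (t+δ), ∀ x ∈ Ioo (-δ) (L+δ),
      HasDerivAt (fun y => uF w y s) (-(1/2) * (pdx w x s) ^ 2) x := by
    intro s hs x hx
    have hcont : ∀ y ∈ Ioo (-δ) (L+δ), ContinuousAt (fun ξ => (pdx w ξ s) ^ 2) y :=
      fun y hy => (cA (pdx w) Sx s hs y (hIooδ hy)).pow 2
    have h1 := primitive_hasDerivAt hδ0 hLδ hx hcont
    have h2 := h1.const_mul (-(1/2) : ℝ)
    simpa [uF, mul_comm] using h2
  have hprimut : ∀ s ∈ Icc (t-δ) (t+δ), ∀ x ∈ Ioo (-δ) (L+δ),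
      HasDerivAt (fun y => utF w y s) (-(pdx w x s * pdt (pdx w) x s)) x := by
    intro s hs x hx
    have hcont : ∀ y ∈ Ioo (-δ) (L+δ), ContinuousAt (fun ξ => pdx w ξ s * pdt (pdx w) ξ s) y :=
      fun y hy => (cA (pdx w) Sx s hs y (hIooδ hy)).mul (cA (pdt (pdx w)) Sxt s hs y (hIooδ hy))
    have h1 := (primitive_hasDerivAt hδ0 hLδ hx hcont).fun_neg
    simpa [utF] using h1
  have hprimutt : ∀ s ∈ Icc (t-δ) (t+δ), ∀ x ∈ Ioo (-δ) (L+δ),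
      HasDerivAt (fun y => uttF w y s)
        (-((pdt (pdx w) x s) ^ 2 + pdx w x s * pdt (pdt (pdx w)) x s)) x := by
    intro s hs x hx
    have hcont : ∀ y ∈ Ioo (-δ) (L+δ), ContinuousAt
        (fun ξ => (pdt (pdx w) ξ s) ^ 2 + pdx w ξ s * pdt (pdt (pdx w)) ξ s) y :=
      fun y hy => ((cA (pdt (pdx w)) Sxt s hs y (hIooδ hy)).pow 2).add
        ((cA (pdx w) Sx s hs y (hIooδ hy)).mul (cA (pdt (pdt (pdx w))) Sxtt s hs y (hIooδ hy)))
    have h1 := (primitive_hasDerivAt hδ0 hLδ hx hcont).fun_neg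
    simpa [uttF] using h1
  -- continuity of slices on [0, L]
  have hCxg : ∀ g : ℝ → ℝ → ℝ, Smo U g → ContinuousOn (fun y => g y t) (Icc (0:ℝ) L) :=
    fun g hg => fun y hy => (cA g hg t htmem y (hIccδ hy)).continuousWithinAt
  have hIntg : ∀ g : ℝ → ℝ → ℝ, Smo U g → IntervalIntegrable (fun y => g y t) volume 0 L :=
    fun g hg => ContinuousOn.intervalIntegrable (by rw [huIL]; exact hCxg g hg)
  -- Leibniz for A
  have hA : HasDerivAt (fun s => ∫ x in (0:ℝ)..L, w x s * pdt w x s)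
      (∫ x in (0:ℝ)..L, (pdt w x t * pdt w x t + w x t * pdt (pdt w) x t)) t := by
    refine leibniz_ball (C := C4*C4 + C0*C5) hδ (F := fun x s => w x s * pdt w x s)
      (F' := fun x s => pdt w x s * pdt w x s + w x s * pdt (pdt w) x s)
      ?_ ?_ ?_ ?_ t (Metric.mem_ball_self (by linarith))
    · intro s hs
      rw [huIL]
      exact fun y hy => ((cA w S0 s (hballIcc hs) y (hIccδ hy)).mul
        (cA (pdt w) St s (hballIcc hs) y (hIccδ hy))).continuousWithinAt
    · intro s hs
      rw [huIL]
      intro y hy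
      exact (((cA (pdt w) St s (hballIcc hs) y (hIccδ hy)).mul
        (cA (pdt w) St s (hballIcc hs) y (hIccδ hy))).add
        ((cA w S0 s (hballIcc hs) y (hIccδ hy)).mul
        (cA (pdt (pdt w)) Stt s (hballIcc hs) y (hIccδ hy)))).continuousWithinAt
    · intro x hx s hs
      rw [huIL] at hx
      have hxU : (x, s) ∈ U := hmem x (hIccδ hx) s (hballIcc hs)
      exact (S0.hasDerivAt_t hUo hxU).mul (St.hasDerivAt_t hUo hxU)
    · intro x hx s hs
      rw [huIL] at hx
      calc |pdt w x s * pdt w x s + w x s * pdt (pdt w) x s|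
          ≤ |pdt w x s * pdt w x s| + |w x s * pdt (pdt w) x s| := abs_add_le _ _
        _ ≤ C4*C4 + C0*C5 := by
            rw [abs_mul, abs_mul]
            exact add_le_add
              (mul_le_mul (hC4 x (hIccδ hx) s (hballIcc hs)) (hC4 x (hIccδ hx) s (hballIcc hs))
                (abs_nonneg _) hC4n)
              (mul_le_mul (hC0 x (hIccδ hx) s (hballIcc hs)) (hC5 x (hIccδ hx) s (hballIcc hs))
                (abs_nonneg _) hC0n)
  -- Leibniz for B
  have hB : HasDerivAt (fun s => ∫ x in (0:ℝ)..L, (pdx (pdx w) x s) ^ 2)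
      (∫ x in (0:ℝ)..L, 2 * pdx (pdx w) x t * pdt (pdx (pdx w)) x t) t := by
    refine leibniz_ball (C := 2*(C6*C7)) hδ (F := fun x s => (pdx (pdx w) x s) ^ 2)
      (F' := fun x s => 2 * pdx (pdx w) x s * pdt (pdx (pdx w)) x s)
      ?_ ?_ ?_ ?_ t (Metric.mem_ball_self (by linarith))
    · intro s hs
      rw [huIL]
      exact fun y hy => ((cA (pdx (pdx w)) Sxx s (hballIcc hs) y (hIccδ hy)).pow 2).continuousWithinAt
    · intro s hs
      rw [huIL]
      intro y hy
      exact ((continuousAt_const.mul (cA (pdx (pdx w)) Sxx s (hballIcc hs) y (hIccδ hy))).mul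
        (cA (pdt (pdx (pdx w))) Sxxt s (hballIcc hs) y (hIccδ hy))).continuousWithinAt
    · intro x hx s hs
      rw [huIL] at hx
      have hxU : (x, s) ∈ U := hmem x (hIccδ hx) s (hballIcc hs)
      have h1 := (Sxx.hasDerivAt_t hUo hxU).fun_pow 2
      refine h1.congr_deriv ?_
      ring
    · intro x hx s hs
      rw [huIL] at hx
      calc |2 * pdx (pdx w) x s * pdt (pdx (pdx w)) x s|
          = 2 * (|pdx (pdx w) x s| * |pdt (pdx (pdx w)) x s|) := by
            rw [mul_assoc, abs_mul, abs_mul, abs_two]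
        _ ≤ 2 * (C6 * C7) := by
            have := mul_le_mul (hC6 x (hIccδ hx) s (hballIcc hs)) (hC7 x (hIccδ hx) s (hballIcc hs))
              (abs_nonneg _) hC6n
            linarith
  -- inner Leibniz: time derivatives of uF and utF
  have hub : ∀ x ∈ Icc (0:ℝ) L, Set.uIcc (0:ℝ) x ⊆ Icc (0:ℝ) L := by
    intro x hx
    rw [uIcc_of_le hx.1]
    exact Icc_subset_Icc le_rfl hx.2
  have huderiv : ∀ x ∈ Icc (0:ℝ) L, ∀ s₀ ∈ Metric.ball t (δ/2),
      HasDerivAt (fun s => uF w x s) (utF w x s₀) s₀ := by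
    intro x hx s₀ hs₀
    have hmain := leibniz_ball (C := 2*(C1*C2)) hδ (a := 0) (b := x) (F := fun ξ s => (pdx w ξ s) ^ 2)
      (F' := fun ξ s => 2 * pdx w ξ s * pdt (pdx w) ξ s)
      (fun s hs => fun ξ hξ => ((cA (pdx w) Sx s (hballIcc hs) ξ
        (hIccδ (hub x hx hξ))).pow 2).continuousWithinAt)
      (fun s hs => fun ξ hξ => ((continuousAt_const.mul (cA (pdx w) Sx s (hballIcc hs) ξ
        (hIccδ (hub x hx hξ)))).mul (cA (pdt (pdx w)) Sxt s (hballIcc hs) ξ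
        (hIccδ (hub x hx hξ)))).continuousWithinAt)
      (fun ξ hξ s hs => by
        have hxU : (ξ, s) ∈ U := hmem ξ (hIccδ (hub x hx hξ)) s (hballIcc hs)
        have h1 := (Sx.hasDerivAt_t hUo hxU).fun_pow 2
        refine h1.congr_deriv ?_
        ring)
      (fun ξ hξ s hs => by
        calc |2 * pdx w ξ s * pdt (pdx w) ξ s|
            = 2 * (|pdx w ξ s| * |pdt (pdx w) ξ s|) := by
              rw [mul_assoc, abs_mul, abs_mul, abs_two]
          _ ≤ 2 * (C1 * C2) := by
              have := mul_le_mul (hC1 ξ (hIccδ (hub x hx hξ)) s (hballIcc hs))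
                (hC2 ξ (hIccδ (hub x hx hξ)) s (hballIcc hs)) (abs_nonneg _) hC1n
              linarith)
      s₀ hs₀
    have h2 := hmain.const_mul (-(1/2) : ℝ)
    have heq : -(1/2) * (∫ ξ in (0:ℝ)..x, 2 * pdx w ξ s₀ * pdt (pdx w) ξ s₀) = utF w x s₀ := by
      rw [utF, show (fun ξ => 2 * pdx w ξ s₀ * pdt (pdx w) ξ s₀)
        = fun ξ => 2 * (pdx w ξ s₀ * pdt (pdx w) ξ s₀) from funext fun ξ => by ring,
        intervalIntegral.integral_const_mul]
      ring
    rw [heq] at h2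
    exact h2
  have hutderiv : ∀ x ∈ Icc (0:ℝ) L, ∀ s₀ ∈ Metric.ball t (δ/2),
      HasDerivAt (fun s => utF w x s) (uttF w x s₀) s₀ := by
    intro x hx s₀ hs₀
    have hmain := leibniz_ball (C := C2*C2 + C1*C3) hδ (a := 0) (b := x)
      (F := fun ξ s => pdx w ξ s * pdt (pdx w) ξ s)
      (F' := fun ξ s => pdt (pdx w) ξ s * pdt (pdx w) ξ s + pdx w ξ s * pdt (pdt (pdx w)) ξ s)
      (fun s hs => fun ξ hξ => ((cA (pdx w) Sx s (hballIcc hs) ξ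
        (hIccδ (hub x hx hξ))).mul (cA (pdt (pdx w)) Sxt s (hballIcc hs) ξ
        (hIccδ (hub x hx hξ)))).continuousWithinAt)
      (fun s hs => fun ξ hξ => (((cA (pdt (pdx w)) Sxt s (hballIcc hs) ξ
        (hIccδ (hub x hx hξ))).mul (cA (pdt (pdx w)) Sxt s (hballIcc hs) ξ
        (hIccδ (hub x hx hξ)))).add ((cA (pdx w) Sx s (hballIcc hs) ξ
        (hIccδ (hub x hx hξ))).mul (cA (pdt (pdt (pdx w))) Sxtt s (hballIcc hs) ξ
        (hIccδ (hub x hx hξ))))).continuousWithinAt)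
      (fun ξ hξ s hs => by
        have hxU : (ξ, s) ∈ U := hmem ξ (hIccδ (hub x hx hξ)) s (hballIcc hs)
        exact (Sx.hasDerivAt_t hUo hxU).mul (Sxt.hasDerivAt_t hUo hxU))
      (fun ξ hξ s hs => by
        calc |pdt (pdx w) ξ s * pdt (pdx w) ξ s + pdx w ξ s * pdt (pdt (pdx w)) ξ s|
            ≤ |pdt (pdx w) ξ s * pdt (pdx w) ξ s| + |pdx w ξ s * pdt (pdt (pdx w)) ξ s| :=
              abs_add_le _ _
          _ ≤ C2*C2 + C1*C3 := by
              rw [abs_mul, abs_mul]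
              exact add_le_add
                (mul_le_mul (hC2 ξ (hIccδ (hub x hx hξ)) s (hballIcc hs))
                  (hC2 ξ (hIccδ (hub x hx hξ)) s (hballIcc hs)) (abs_nonneg _) hC2n)
                (mul_le_mul (hC1 ξ (hIccδ (hub x hx hξ)) s (hballIcc hs))
                  (hC3 ξ (hIccδ (hub x hx hξ)) s (hballIcc hs)) (abs_nonneg _) hC1n))
      s₀ hs₀
    have h2 := hmain.neg
    have heq : -(∫ ξ in (0:ℝ)..x,
        (pdt (pdx w) ξ s₀ * pdt (pdx w) ξ s₀ + pdx w ξ s₀ * pdt (pdt (pdx w)) ξ s₀))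
        = uttF w x s₀ := by
      rw [uttF, show (fun ξ => (pdt (pdx w) ξ s₀) ^ 2 + pdx w ξ s₀ * pdt (pdt (pdx w)) ξ s₀)
        = fun ξ => pdt (pdx w) ξ s₀ * pdt (pdx w) ξ s₀ + pdx w ξ s₀ * pdt (pdt (pdx w)) ξ s₀ from
        funext fun ξ => by ring]
    rw [heq] at h2
    exact h2
  -- Leibniz for C
  have hC : HasDerivAt (fun s => ∫ x in (0:ℝ)..L, uF w x s * utF w x s)
      (∫ x in (0:ℝ)..L, (utF w x t * utF w x t + uF w x t * uttF w x t)) t := by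
    have hδ2 : 0 < δ/2 := by linarith
    refine leibniz_ball (C := (C1*C2*L) * (C1*C2*L) + ((1/2)*(C1*C1*L)) * ((C2*C2 + C1*C3)*L)) hδ2 (F := fun x s => uF w x s * utF w x s)
      (F' := fun x s => utF w x s * utF w x s + uF w x s * uttF w x s)
      ?_ ?_ ?_ ?_ t (Metric.mem_ball_self (by linarith))
    · intro s hs
      rw [huIL]
      have hs' : s ∈ Icc (t-δ) (t+δ) := hballIcc (Metric.ball_subset_ball (by linarith) hs)
      exact fun y hy => (((hprimu s hs' y (hIccsub hy)).continuousAt).mul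
        ((hprimut s hs' y (hIccsub hy)).continuousAt)).continuousWithinAt
    · intro s hs
      rw [huIL]
      have hs' : s ∈ Icc (t-δ) (t+δ) := hballIcc (Metric.ball_subset_ball (by linarith) hs)
      exact fun y hy => ((((hprimut s hs' y (hIccsub hy)).continuousAt).mul
        ((hprimut s hs' y (hIccsub hy)).continuousAt)).add
        (((hprimu s hs' y (hIccsub hy)).continuousAt).mul
        ((hprimutt s hs' y (hIccsub hy)).continuousAt))).continuousWithinAt
    · intro x hx s hs
      rw [huIL] at hx
      exact (huderiv x hx s hs).mul (hutderiv x hx s hs)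
    · intro x hx s hs
      rw [huIL] at hx
      have hs' : s ∈ Icc (t-δ) (t+δ) := hballIcc (Metric.ball_subset_ball (by linarith) hs)
      calc |utF w x s * utF w x s + uF w x s * uttF w x s|
          ≤ |utF w x s * utF w x s| + |uF w x s * uttF w x s| := abs_add_le _ _
        _ ≤ (C1*C2*L) * (C1*C2*L) + ((1/2)*(C1*C1*L)) * ((C2*C2 + C1*C3)*L) := by
            rw [abs_mul, abs_mul]
            exact add_le_add
              (mul_le_mul (hbut x hx s hs') (hbut x hx s hs') (abs_nonneg _)
                (mul_nonneg (mul_nonneg hC1n hC2n) hL.le))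
              (mul_le_mul (hbu x hx s hs') (hbutt x hx s hs') (abs_nonneg _)
                (by positivity))
  -- boundary conditions at time t and their time derivatives
  have htIcc : t ∈ Icc (0:ℝ) T := ⟨ht.1.le, ht.2.le⟩
  obtain ⟨hbc0, hbcx0, hbcxxL, hbcxxxL⟩ := hbc t htIcc
  have hBt3 : pdt (pdx (pdx (pdx w))) L t = 0 := by
    have hee : (fun s => pdx (pdx (pdx w)) L s) =ᶠ[nhds t] (fun _ => (0:ℝ)) := by
      filter_upwards [Ioo_mem_nhds ht.1 ht.2] with s hs
      exact (hbc s ⟨hs.1.le, hs.2.le⟩).2.2.2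
    show deriv (fun s => pdx (pdx (pdx w)) L s) t = 0
    rw [hee.deriv_eq]
    exact deriv_const t 0
  have hBt2 : pdt (pdx (pdx w)) L t = 0 := by
    have hee : (fun s => pdx (pdx w) L s) =ᶠ[nhds t] (fun _ => (0:ℝ)) := by
      filter_upwards [Ioo_mem_nhds ht.1 ht.2] with s hs
      exact (hbc s ⟨hs.1.le, hs.2.le⟩).2.2.1
    show deriv (fun s => pdx (pdx w) L s) t = 0
    rw [hee.deriv_eq]
    exact deriv_const t 0
  -- Schwarz symmetry swaps
  have s1 : ∀ q ∈ U, pdx (pdt w) q.1 q.2 = pdt (pdx w) q.1 q.2 := by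
    intro q hq
    exact (S0.swap hUo (by simpa using hq)).symm
  have s2 : ∀ q ∈ U, pdx (pdx (pdt w)) q.1 q.2 = pdt (pdx (pdx w)) q.1 q.2 := by
    intro q hq
    rw [pdx_congrOn hUo s1 (by simpa using hq)]
    exact (Sx.swap hUo (by simpa using hq)).symm
  have s3 : ∀ q ∈ U, pdx (pdx (pdx (pdt w))) q.1 q.2 = pdt (pdx (pdx (pdx w))) q.1 q.2 := by
    intro q hq
    rw [pdx_congrOn hUo s2 (by simpa using hq)]
    exact (Sxx.swap hUo (by simpa using hq)).symm
  have hLIcc : L ∈ Icc (0:ℝ) L := ⟨hL.le, le_refl L⟩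
  have h0Icc : (0:ℝ) ∈ Icc (0:ℝ) L := ⟨le_refl 0, hL.le⟩
  -- derivative of slices in x
  have hDx : ∀ g : ℝ → ℝ → ℝ, Smo U g → ∀ y ∈ Icc (0:ℝ) L,
      HasDerivAt (fun y' => g y' t) (pdx g y t) y :=
    fun g hg y hy => hg.hasDerivAt_x hUo (hUy y hy)
  have hDx' : ∀ g : ℝ → ℝ → ℝ, Smo U g → ∀ y ∈ Set.uIcc (0:ℝ) L,
      HasDerivAt (fun y' => g y' t) (pdx g y t) y :=
    fun g hg y hy => hDx g hg y (huIL ▸ hy)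
  -- term 2: D ∂x⁴ w
  have I2a : (∫ y in (0:ℝ)..L, w y t * pdx (pdx (pdx (pdx w))) y t)
      = - ∫ y in (0:ℝ)..L, pdx w y t * pdx (pdx (pdx w)) y t := by
    have h := intervalIntegral.integral_mul_deriv_eq_deriv_mul
      (u := fun y => w y t) (u' := fun y => pdx w y t)
      (v := fun y => pdx (pdx (pdx w)) y t) (v' := fun y => pdx (pdx (pdx (pdx w))) y t)
      (hDx' w S0) (hDx' (pdx (pdx (pdx w))) Sxxx) (hIntg (pdx w) Sx)
      (hIntg (pdx (pdx (pdx (pdx w)))) Sxxxx)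
    rw [h]; simp only [hbcxxxL, hbc0]
    ring
  have I2b : (∫ y in (0:ℝ)..L, pdx w y t * pdx (pdx (pdx w)) y t)
      = - ∫ y in (0:ℝ)..L, pdx (pdx w) y t * pdx (pdx w) y t := by
    have h := intervalIntegral.integral_mul_deriv_eq_deriv_mul
      (u := fun y => pdx w y t) (u' := fun y => pdx (pdx w) y t)
      (v := fun y => pdx (pdx w) y t) (v' := fun y => pdx (pdx (pdx w)) y t)
      (hDx' (pdx w) Sx) (hDx' (pdx (pdx w)) Sxx) (hIntg (pdx (pdx w)) Sxx)
      (hIntg (pdx (pdx (pdx w))) Sxxx)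
    rw [h]; simp only [hbcxxL, hbcx0]
    ring
  have I2 : (∫ y in (0:ℝ)..L, w y t * pdx (pdx (pdx (pdx w))) y t)
      = ∫ y in (0:ℝ)..L, pdx (pdx w) y t * pdx (pdx w) y t := by
    rw [I2a, I2b]; ring
  -- term 3: k2 ∂x⁴ w_t
  have I3a : (∫ y in (0:ℝ)..L, w y t * pdx (pdx (pdx (pdx (pdt w)))) y t)
      = - ∫ y in (0:ℝ)..L, pdx w y t * pdx (pdx (pdx (pdt w))) y t := by
    have h := intervalIntegral.integral_mul_deriv_eq_deriv_mul
      (u := fun y => w y t) (u' := fun y => pdx w y t)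
      (v := fun y => pdx (pdx (pdx (pdt w))) y t)
      (v' := fun y => pdx (pdx (pdx (pdx (pdt w)))) y t)
      (hDx' w S0) (hDx' (pdx (pdx (pdx (pdt w)))) Stx3) (hIntg (pdx w) Sx)
      (hIntg (pdx (pdx (pdx (pdx (pdt w))))) Stx4)
    have hbd : pdx (pdx (pdx (pdt w))) L t = 0 := by
      have := s3 (L, t) (hUy L hLIcc)
      simp only at this
      rw [this, hBt3]
    rw [h]; simp only [hbd, hbc0]
    ring
  have I3b : (∫ y in (0:ℝ)..L, pdx w y t * pdx (pdx (pdx (pdt w))) y t)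
      = - ∫ y in (0:ℝ)..L, pdx (pdx w) y t * pdx (pdx (pdt w)) y t := by
    have h := intervalIntegral.integral_mul_deriv_eq_deriv_mul
      (u := fun y => pdx w y t) (u' := fun y => pdx (pdx w) y t)
      (v := fun y => pdx (pdx (pdt w)) y t)
      (v' := fun y => pdx (pdx (pdx (pdt w))) y t)
      (hDx' (pdx w) Sx) (hDx' (pdx (pdx (pdt w))) Stx2) (hIntg (pdx (pdx w)) Sxx)
      (hIntg (pdx (pdx (pdx (pdt w)))) Stx3)
    have hbd : pdx (pdx (pdt w)) L t = 0 := by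
      have := s2 (L, t) (hUy L hLIcc)
      simp only at this
      rw [this, hBt2]
    rw [h]; simp only [hbd, hbcx0]
    ring
  have I3 : (∫ y in (0:ℝ)..L, w y t * pdx (pdx (pdx (pdx (pdt w)))) y t)
      = ∫ y in (0:ℝ)..L, pdx (pdx w) y t * pdt (pdx (pdx w)) y t := by
    rw [I3a, I3b, neg_neg]
    apply intervalIntegral.integral_congr
    intro y hy
    have := s2 (y, t) (hUy y (huIL ▸ hy))
    simp only at this
    simp only [this]
  -- term 4
  have I4 : (∫ y in (0:ℝ)..L, w y t * pdx (fun y s => (pdx (pdx w) y s) ^ 2 * pdx w y s) y t)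
      = - ∫ y in (0:ℝ)..L, pdx w y t * ((pdx (pdx w) y t) ^ 2 * pdx w y t) := by
    have h := intervalIntegral.integral_mul_deriv_eq_deriv_mul
      (u := fun y => w y t) (u' := fun y => pdx w y t)
      (v := fun y => (pdx (pdx w) y t) ^ 2 * pdx w y t)
      (v' := fun y => pdx (fun y s => (pdx (pdx w) y s) ^ 2 * pdx w y s) y t)
      (hDx' w S0) (hDx' _ SΦ) (hIntg (pdx w) Sx) (hIntg _ SΦx)
    rw [h]; simp only [hbcxxL, hbc0]
    ring
  -- term 5
  have hΨLval : pdx (fun y s => (pdx w y s) ^ 2 * pdx (pdx w) y s) L t = 0 := by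
    have hd := ((Sx.hasDerivAt_x hUo (hUy L hLIcc)).fun_pow 2).fun_mul
      (Sxx.hasDerivAt_x hUo (hUy L hLIcc))
    rw [show pdx (fun y s => (pdx w y s) ^ 2 * pdx (pdx w) y s) L t
      = deriv (fun y => (pdx w y t) ^ 2 * pdx (pdx w) y t) L from rfl, hd.deriv,
      hbcxxL, hbcxxxL]
    ring
  have I5a : (∫ y in (0:ℝ)..L,
        w y t * pdx (pdx (fun y s => (pdx w y s) ^ 2 * pdx (pdx w) y s)) y t)
      = - ∫ y in (0:ℝ)..L,
          pdx w y t * pdx (fun y s => (pdx w y s) ^ 2 * pdx (pdx w) y s) y t := by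
    have h := intervalIntegral.integral_mul_deriv_eq_deriv_mul
      (u := fun y => w y t) (u' := fun y => pdx w y t)
      (v := fun y => pdx (fun y s => (pdx w y s) ^ 2 * pdx (pdx w) y s) y t)
      (v' := fun y => pdx (pdx (fun y s => (pdx w y s) ^ 2 * pdx (pdx w) y s)) y t)
      (hDx' w S0) (hDx' _ SΨx) (hIntg (pdx w) Sx) (hIntg _ SΨxx)
    rw [h]; simp only [hΨLval, hbc0]
    ring
  have I5b : (∫ y in (0:ℝ)..L,
        pdx w y t * pdx (fun y s => (pdx w y s) ^ 2 * pdx (pdx w) y s) y t)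
      = - ∫ y in (0:ℝ)..L, pdx (pdx w) y t * ((pdx w y t) ^ 2 * pdx (pdx w) y t) := by
    have h := intervalIntegral.integral_mul_deriv_eq_deriv_mul
      (u := fun y => pdx w y t) (u' := fun y => pdx (pdx w) y t)
      (v := fun y => (pdx w y t) ^ 2 * pdx (pdx w) y t)
      (v' := fun y => pdx (fun y s => (pdx w y s) ^ 2 * pdx (pdx w) y s) y t)
      (hDx' (pdx w) Sx) (hDx' _ SΨ) (hIntg (pdx (pdx w)) Sxx) (hIntg _ SΨx)
    rw [h]; simp only [hbcxxL, hbcx0]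
    ring
  have I5 : (∫ y in (0:ℝ)..L,
        w y t * pdx (pdx (fun y s => (pdx w y s) ^ 2 * pdx (pdx w) y s)) y t)
      = ∫ y in (0:ℝ)..L, pdx (pdx w) y t * ((pdx w y t) ^ 2 * pdx (pdx w) y t) := by
    rw [I5a, I5b]; ring
  -- term 6 : the nonlocal inertia term
  have hLIoo : L ∈ Ioo (-δ) (L+δ) := ⟨by linarith, by linarith⟩
  have huttc : ∀ y ∈ Ioo (-δ) (L+δ), ContinuousAt (fun ξ => uttF w ξ t) y :=
    fun y hy => (hprimutt t htmem y hy).continuousAt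
  have hGd : ∀ x ∈ Ioo (-δ) (L+δ),
      HasDerivAt (fun y => ∫ ξ in y..L, uttF w ξ t) (-(uttF w x t)) x :=
    fun x hx => primitive_hasDerivAt_right hδ0 hLδ hx hLIoo huttc
  have hGc : ContinuousOn (fun y => ∫ ξ in y..L, uttF w ξ t) (Icc (0:ℝ) L) :=
    fun y hy => ((hGd y (hIccsub hy)).continuousAt).continuousWithinAt
  have hΘval : ∀ y ∈ Icc (0:ℝ) L,
      pdx (fun y' s => pdx w y' s * ∫ ξ in y'..L, uttF w ξ s) y t
      = pdx (pdx w) y t * (∫ ξ in y..L, uttF w ξ t) + pdx w y t * -(uttF w y t) := by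
    intro y hy
    have hd := (Sx.hasDerivAt_x hUo (hUy y hy)).mul (hGd y (hIccsub hy))
    rw [show pdx (fun y' s => pdx w y' s * ∫ ξ in y'..L, uttF w ξ s) y t
      = deriv (fun y' => pdx w y' t * ∫ ξ in y'..L, uttF w ξ t) y from rfl]
    exact hd.deriv
  have hΘderiv : ∀ y ∈ Set.uIcc (0:ℝ) L,
      HasDerivAt (fun y' => pdx w y' t * ∫ ξ in y'..L, uttF w ξ t)
        (pdx (fun y' s => pdx w y' s * ∫ ξ in y'..L, uttF w ξ s) y t) y := by
    intro y hy
    rw [hΘval y (huIL ▸ hy)]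
    exact (Sx.hasDerivAt_x hUo (hUy y (huIL ▸ hy))).mul (hGd y (hIccsub (huIL ▸ hy)))
  have cutt : ContinuousOn (fun y => uttF w y t) (Icc (0:ℝ) L) :=
    fun y hy => ((hprimutt t htmem y (hIccsub hy)).continuousAt).continuousWithinAt
  have hΘcont : ContinuousOn
      (fun y => pdx (fun y' s => pdx w y' s * ∫ ξ in y'..L, uttF w ξ s) y t) (Icc (0:ℝ) L) := by
    have hbase : ContinuousOn
        (fun y => pdx (pdx w) y t * (∫ ξ in y..L, uttF w ξ t) + pdx w y t * -(uttF w y t))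
        (Icc (0:ℝ) L) :=
      ((hCxg (pdx (pdx w)) Sxx).mul hGc).add ((hCxg (pdx w) Sx).mul cutt.neg)
    exact hbase.congr fun y hy => hΘval y hy
  have hΘint : IntervalIntegrable
      (fun y => pdx (fun y' s => pdx w y' s * ∫ ξ in y'..L, uttF w ξ s) y t) volume 0 L :=
    ContinuousOn.intervalIntegrable (by rw [huIL]; exact hΘcont)
  have I6a : (∫ y in (0:ℝ)..L, w y t * pdx (fun y' s => pdx w y' s * ∫ ξ in y'..L, uttF w ξ s) y t)
      = - ∫ y in (0:ℝ)..L, pdx w y t * (pdx w y t * ∫ ξ in y..L, uttF w ξ t) := by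
    have h := intervalIntegral.integral_mul_deriv_eq_deriv_mul
      (u := fun y => w y t) (u' := fun y => pdx w y t)
      (v := fun y => pdx w y t * ∫ ξ in y..L, uttF w ξ t)
      (v' := fun y => pdx (fun y' s => pdx w y' s * ∫ ξ in y'..L, uttF w ξ s) y t)
      (hDx' w S0) hΘderiv (hIntg (pdx w) Sx) hΘint
    rw [h]
    simp only [intervalIntegral.integral_same, hbc0, mul_zero, zero_mul]
    ring
  have cu : ContinuousOn (fun y => uF w y t) (Icc (0:ℝ) L) :=
    fun y hy => ((hprimu t htmem y (hIccsub hy)).continuousAt).continuousWithinAt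
  have cut : ContinuousOn (fun y => utF w y t) (Icc (0:ℝ) L) :=
    fun y hy => ((hprimut t htmem y (hIccsub hy)).continuousAt).continuousWithinAt
  have huF0 : uF w 0 t = 0 := by simp [uF]
  have I6b : (∫ y in (0:ℝ)..L, (pdx w y t * pdx w y t) * (∫ ξ in y..L, uttF w ξ t))
      = -2 * ∫ y in (0:ℝ)..L, uF w y t * uttF w y t := by
    have h := intervalIntegral.integral_mul_deriv_eq_deriv_mul
      (u := fun y => uF w y t) (u' := fun y => -(1/2) * (pdx w y t) ^ 2)
      (v := fun y => ∫ ξ in y..L, uttF w ξ t) (v' := fun y => -(uttF w y t))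
      (fun y hy => hprimu t htmem y (hIccsub (huIL ▸ hy)))
      (fun y hy => hGd y (hIccsub (huIL ▸ hy)))
      (ContinuousOn.intervalIntegrable (by
        rw [huIL]
        exact continuousOn_const.mul ((hCxg (pdx w) Sx).pow 2)))
      (ContinuousOn.intervalIntegrable (by rw [huIL]; exact cutt.neg))
    have e1 : (∫ y in (0:ℝ)..L, uF w y t * -(uttF w y t))
        = - ∫ y in (0:ℝ)..L, uF w y t * uttF w y t := by
      rw [show (fun y => uF w y t * -(uttF w y t))
        = fun y => -(uF w y t * uttF w y t) from funext fun y => by ring,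
        intervalIntegral.integral_neg]
    have e2 : (∫ y in (0:ℝ)..L, (-(1/2) * (pdx w y t) ^ 2) * (∫ ξ in y..L, uttF w ξ t))
        = -(1/2) * ∫ y in (0:ℝ)..L, ((pdx w y t) ^ 2) * (∫ ξ in y..L, uttF w ξ t) := by
      rw [show (fun y => (-(1/2) * (pdx w y t) ^ 2) * (∫ ξ in y..L, uttF w ξ t))
        = fun y => -(1/2) * (((pdx w y t) ^ 2) * (∫ ξ in y..L, uttF w ξ t)) from
        funext fun y => by ring, intervalIntegral.integral_const_mul]
    have e3 : (∫ y in (0:ℝ)..L, (pdx w y t * pdx w y t) * (∫ ξ in y..L, uttF w ξ t))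
        = ∫ y in (0:ℝ)..L, ((pdx w y t) ^ 2) * (∫ ξ in y..L, uttF w ξ t) :=
      intervalIntegral.integral_congr fun y _ => by ring
    simp only [intervalIntegral.integral_same, huF0, mul_zero, zero_mul] at h
    rw [e1, e2] at h
    rw [e3]
    linarith
  have I6 : (∫ y in (0:ℝ)..L, w y t * pdx (fun y' s => pdx w y' s * ∫ ξ in y'..L, uttF w ξ s) y t)
      = 2 * ∫ y in (0:ℝ)..L, uF w y t * uttF w y t := by
    rw [I6a]
    have e4 : (∫ y in (0:ℝ)..L, pdx w y t * (pdx w y t * ∫ ξ in y..L, uttF w ξ t))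
        = ∫ y in (0:ℝ)..L, (pdx w y t * pdx w y t) * (∫ ξ in y..L, uttF w ξ t) :=
      intervalIntegral.integral_congr fun y _ => by ring
    rw [e4, I6b]
    ring
  -- integrate the PDE against w
  have hPDEpt : ∀ y ∈ Icc (0:ℝ) L,
      pdt (pdt w) y t + D * pdx (pdx (pdx (pdx w))) y t
        + k2 * pdx (pdx (pdx (pdx (pdt w)))) y t
        - D * pdx (fun y s => (pdx (pdx w) y s) ^ 2 * pdx w y s) y t
        + D * pdx (pdx (fun y s => (pdx w y s) ^ 2 * pdx (pdx w) y s)) y t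
        + pdx (fun y s => pdx w y s * ∫ ξ in y..L, uttF w ξ s) y t = 0 :=
    fun y hy => by simpa using hpde y hy t htIcc
  have ia1 : IntervalIntegrable (fun y => w y t * pdt (pdt w) y t) volume 0 L :=
    ContinuousOn.intervalIntegrable (by rw [huIL]; exact (hCxg w S0).mul (hCxg _ Stt))
  have ia2 : IntervalIntegrable (fun y => D * (w y t * pdx (pdx (pdx (pdx w))) y t)) volume 0 L :=
    (ContinuousOn.intervalIntegrable (by rw [huIL]; exact (hCxg w S0).mul (hCxg _ Sxxxx))).const_mul D
  have ia3 : IntervalIntegrable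
      (fun y => k2 * (w y t * pdx (pdx (pdx (pdx (pdt w)))) y t)) volume 0 L :=
    (ContinuousOn.intervalIntegrable (by rw [huIL]; exact (hCxg w S0).mul (hCxg _ Stx4))).const_mul k2
  have ia4 : IntervalIntegrable
      (fun y => D * (w y t * pdx (fun y s => (pdx (pdx w) y s) ^ 2 * pdx w y s) y t)) volume 0 L :=
    (ContinuousOn.intervalIntegrable (by rw [huIL]; exact (hCxg w S0).mul (hCxg _ SΦx))).const_mul D
  have ia5 : IntervalIntegrable
      (fun y => D * (w y t * pdx (pdx (fun y s => (pdx w y s) ^ 2 * pdx (pdx w) y s)) y t)) volume 0 L :=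
    (ContinuousOn.intervalIntegrable (by rw [huIL]; exact (hCxg w S0).mul (hCxg _ SΨxx))).const_mul D
  have ia6 : IntervalIntegrable
      (fun y => w y t * pdx (fun y' s => pdx w y' s * ∫ ξ in y'..L, uttF w ξ s) y t) volume 0 L :=
    ContinuousOn.intervalIntegrable (by rw [huIL]; exact (hCxg w S0).mul hΘcont)
  have hzero : (∫ y in (0:ℝ)..L,
      (w y t * pdt (pdt w) y t
        + D * (w y t * pdx (pdx (pdx (pdx w))) y t)
        + k2 * (w y t * pdx (pdx (pdx (pdx (pdt w)))) y t)
        - D * (w y t * pdx (fun y s => (pdx (pdx w) y s) ^ 2 * pdx w y s) y t)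
        + D * (w y t * pdx (pdx (fun y s => (pdx w y s) ^ 2 * pdx (pdx w) y s)) y t)
        + w y t * pdx (fun y' s => pdx w y' s * ∫ ξ in y'..L, uttF w ξ s) y t)) = 0 := by
    have hEq : EqOn (fun y =>
        w y t * pdt (pdt w) y t
        + D * (w y t * pdx (pdx (pdx (pdx w))) y t)
        + k2 * (w y t * pdx (pdx (pdx (pdx (pdt w)))) y t)
        - D * (w y t * pdx (fun y s => (pdx (pdx w) y s) ^ 2 * pdx w y s) y t)
        + D * (w y t * pdx (pdx (fun y s => (pdx w y s) ^ 2 * pdx (pdx w) y s)) y t)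
        + w y t * pdx (fun y' s => pdx w y' s * ∫ ξ in y'..L, uttF w ξ s) y t)
        (fun _ => (0:ℝ)) (Set.uIcc 0 L) := by
      intro y hy
      have h := hPDEpt y (huIL ▸ hy)
      simp only
      linear_combination w y t * h
    rw [intervalIntegral.integral_congr hEq]
    simp
  rw [intervalIntegral.integral_add ((((ia1.add ia2).add ia3).sub ia4).add ia5) ia6,
    intervalIntegral.integral_add (((ia1.add ia2).add ia3).sub ia4) ia5,
    intervalIntegral.integral_sub ((ia1.add ia2).add ia3) ia4,
    intervalIntegral.integral_add (ia1.add ia2) ia3,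
    intervalIntegral.integral_add ia1 ia2,
    intervalIntegral.integral_const_mul, intervalIntegral.integral_const_mul,
    intervalIntegral.integral_const_mul, intervalIntegral.integral_const_mul] at hzero
  -- canonical forms
  have gB : (∫ y in (0:ℝ)..L, pdx (pdx w) y t * pdx (pdx w) y t)
      = ∫ x in (0:ℝ)..L, (pdx (pdx w) x t) ^ 2 :=
    intervalIntegral.integral_congr fun y _ => by ring
  have g4 : (∫ y in (0:ℝ)..L, pdx w y t * ((pdx (pdx w) y t) ^ 2 * pdx w y t))
      = ∫ x in (0:ℝ)..L, (pdx w x t * pdx (pdx w) x t) ^ 2 :=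
    intervalIntegral.integral_congr fun y _ => by ring
  have g5 : (∫ y in (0:ℝ)..L, pdx (pdx w) y t * ((pdx w y t) ^ 2 * pdx (pdx w) y t))
      = ∫ x in (0:ℝ)..L, (pdx w x t * pdx (pdx w) x t) ^ 2 :=
    intervalIntegral.integral_congr fun y _ => by ring
  rw [I2, I3, I4, I5, I6, gB, g4, g5] at hzero
  -- assemble the total derivative
  have hTot := (hA.add (hB.const_mul (k2/2))).add (hC.const_mul 2)
  refine hTot.deriv.trans ?_
  -- split the derivative integrals
  have iA1 : IntervalIntegrable (fun y => pdt w y t * pdt w y t) volume 0 L :=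
    ContinuousOn.intervalIntegrable (by rw [huIL]; exact (hCxg _ St).mul (hCxg _ St))
  have sA : (∫ x in (0:ℝ)..L, (pdt w x t * pdt w x t + w x t * pdt (pdt w) x t))
      = (∫ y in (0:ℝ)..L, pdt w y t * pdt w y t) + ∫ y in (0:ℝ)..L, w y t * pdt (pdt w) y t :=
    intervalIntegral.integral_add iA1 ia1
  have sB : (∫ x in (0:ℝ)..L, 2 * pdx (pdx w) x t * pdt (pdx (pdx w)) x t)
      = 2 * ∫ y in (0:ℝ)..L, pdx (pdx w) y t * pdt (pdx (pdx w)) y t := by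
    rw [show (fun x => 2 * pdx (pdx w) x t * pdt (pdx (pdx w)) x t)
      = fun x => 2 * (pdx (pdx w) x t * pdt (pdx (pdx w)) x t) from funext fun x => by ring,
      intervalIntegral.integral_const_mul]
  have iC1 : IntervalIntegrable (fun y => utF w y t * utF w y t) volume 0 L :=
    ContinuousOn.intervalIntegrable (by rw [huIL]; exact cut.mul cut)
  have iC2 : IntervalIntegrable (fun y => uF w y t * uttF w y t) volume 0 L :=
    ContinuousOn.intervalIntegrable (by rw [huIL]; exact cu.mul cutt)
  have sC : (∫ x in (0:ℝ)..L, (utF w x t * utF w x t + uF w x t * uttF w x t))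
      = (∫ y in (0:ℝ)..L, utF w y t * utF w y t) + ∫ y in (0:ℝ)..L, uF w y t * uttF w y t :=
    intervalIntegral.integral_add iC1 iC2
  have gA : (∫ y in (0:ℝ)..L, pdt w y t * pdt w y t) = ∫ x in (0:ℝ)..L, (pdt w x t) ^ 2 :=
    intervalIntegral.integral_congr fun y _ => by ring
  have gU : (∫ y in (0:ℝ)..L, utF w y t * utF w y t) = ∫ x in (0:ℝ)..L, (utF w x t) ^ 2 :=
    intervalIntegral.integral_congr fun y _ => by ring
  rw [sA, sB, sC, gA, gU]
  linear_combination hzero
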